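/- For the twist link polynomial Γ⁻(λ)[L_{j,k}] = λ⁰ + λ^{-|j-k|}, two twist links L_{j,k} and L_{j',k'} with j+k = j'+k' (so topologically equivalent) have equal polynomials if and only if |j-k| = |j'-k'|. Consequently, for m ≥ 2 the links L_{1,m-1}, L_{2,m-2}, …, L_{⌊m/2⌋, m-⌊m/2⌋} are pairwise distinguished by this polynomial. -/

import Mathlib

open LaurentPolynomial

lemma key_aux (d e : ℤ) : T (0:ℤ) + T (-d) = (T 0 + T (-e) : LaurentPolynomial ℤ) ↔ d = e := by
  constructor
  · intro h
    by_contra hne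
    have hd := congrArg (fun p : LaurentPolynomial ℤ => p.coeff (-d)) h
    have he := congrArg (fun p : LaurentPolynomial ℤ => p.coeff (-e)) h
    simp only [AddMonoidAlgebra.coeff_add, Finsupp.add_apply, LaurentPolynomial.T_apply] at hd he
    split_ifs at hd he <;> omega
  · rintro rfl; rfl

/-- with `Γ⁻(λ)[L_{j,k}] = λ⁰ + λ^{-|j-k|}`, topologically equivalent twist links
(`j+k = j'+k'`) have equal polynomials iff `|j-k| = |j'-k'|`; consequently for `m ≥ 2` the links
`L_{a, m-a}` for `1 ≤ a ≤ ⌊m/2⌋` are pairwise distinguished by the polynomial. -/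
theorem stmt_4 :
    let Γ : ℤ → ℤ → LaurentPolynomial ℤ := fun j k => T 0 + T (-|j - k|)
    (∀ j k j' k' : ℤ, 0 < j → 0 < k → 0 < j' → 0 < k' → j + k = j' + k' →
      (Γ j k = Γ j' k' ↔ |j - k| = |j' - k'|)) ∧
    (∀ m : ℤ, 2 ≤ m → ∀ a b : ℤ, 1 ≤ a → 2 * a ≤ m → 1 ≤ b → 2 * b ≤ m →
      (Γ a (m - a) = Γ b (m - b) ↔ a = b)) := by
  intro Γ
  constructor
  · intro j k j' k' _ _ _ _ _
    exact key_aux _ _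
  · intro m hm a b ha ham hb hbm
    rw [show Γ a (m-a) = T 0 + T (-|a - (m-a)|) from rfl,
        show Γ b (m-b) = T 0 + T (-|b - (m-b)|) from rfl, key_aux]
    rw [abs_sub_comm, abs_sub_comm (b) (m-b)]
    rw [abs_of_nonneg (by omega), abs_of_nonneg (by omega)]
    omega
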